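/- Let μ be a probability measure on Ω, let Xᵢ, Xⱼ be Boolean sensitivity indicators with μ(Xᵢ = a ∧ Xⱼ = b) > 0 for all a, b ∈ {0,1}, and let Mᵢ be the release indicator produced by the OSDPRR mechanism with parameter ε > 0 for Xᵢ, with Mᵢ conditionally independent of Xⱼ given Xᵢ. Set θᵢ = μ(Xᵢ = 0), θⱼ = μ(Xⱼ = 0), δ₁ = P(Xᵢ = 0 | Xⱼ = 0), δ₂ = P(Xᵢ = 0 | Xⱼ = 1), f₁ = (δ₁(e^ε − 1) + 1)/(δ₂(e^ε − 1) + 1), f₂ = (1 − δ₁)/(1 − δ₂), and let θ₁, θ₂ ∈ (0,1) be determined by the odds relations θ₁/(1 − θ₁) = f₁·θⱼ/(1 − θⱼ) and θ₂/(1 − θ₂) = f₂·θⱼ/(1 − θⱼ). Define the mutual information I(Xⱼ; Mᵢ) = Σ_{x,m ∈ {0,1}} μ(Xⱼ = x ∧ Mᵢ = m) · log( μ(Xⱼ = x ∧ Mᵢ = m) / (μ(Xⱼ = x)·μ(Mᵢ = m)) ), with the convention that terms with μ(Xⱼ = x ∧ Mᵢ = m) = 0 contribute 0. Then I(Xⱼ;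 Mᵢ) = H₂(θⱼ) − H₂(θ₁)·(θᵢ + e^{−ε}(1 − θᵢ)) − H₂(θ₂)·(1 − e^{−ε})(1 − θᵢ), where H₂ is the binary entropy function. -/

import Mathlib

open MeasureTheory Real

/-- Conditional probability `P(A | B) = μ(A ∩ B) / μ(B)`, as a real number. -/
noncomputable def condProb {Ω : Type*} [MeasurableSpace Ω] (μ : Measure Ω) (A B : Set Ω) : ℝ :=
  (μ (A ∩ B)).toReal / (μ B).toReal

/-- The binary entropy function `H₂(p) = −p·log p − (1 − p)·log(1 − p)`
(with the convention `0 · log 0 = 0`, which holds automatically since `Real.log 0 = 0`). -/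
noncomputable def binEnt (p : ℝ) : ℝ :=
  -p * Real.log p - (1 - p) * Real.log (1 - p)

private lemma split_bool {Ω : Type*} [MeasurableSpace Ω] (μ : Measure Ω) {f : Ω → Bool}
    (hf : Measurable f) (S : Set Ω) :
    μ S = μ (S ∩ {ω | f ω = false}) + μ (S ∩ {ω | f ω = true}) := by
  have ht : MeasurableSet {ω | f ω = true} := hf (measurableSet_singleton true)
  have h := measure_inter_add_diff (μ := μ) S ht
  have h2 : S \ {ω | f ω = true} = S ∩ {ω | f ω = false} := by
    ext ω; cases h : f ω <;> simp [Set.mem_diff, h]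
  rw [← h, h2, add_comm]

private lemma split_bool_real {Ω : Type*} [MeasurableSpace Ω] (μ : Measure Ω)
    [IsFiniteMeasure μ] {f : Ω → Bool} (hf : Measurable f) (S : Set Ω) :
    (μ S).toReal = (μ (S ∩ {ω | f ω = false})).toReal + (μ (S ∩ {ω | f ω = true})).toReal := by
  rw [split_bool μ hf S, ENNReal.toReal_add (measure_ne_top μ _) (measure_ne_top μ _)]


set_option maxHeartbeats 2000000 in
/-- **mutual information between Xⱼ and Mᵢ under OSDPRR with dependency.** With
`θᵢ = P(Xᵢ = 0)`, `θⱼ = P(Xⱼ = 0)`, `δ₁ = P(Xᵢ = 0 | Xⱼ = 0)`, `δ₂ = P(Xᵢ = 0 | Xⱼ = 1)`,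
`f₁ = (δ₁(e^ε − 1) + 1)/(δ₂(e^ε − 1) + 1)`, `f₂ = (1 − δ₁)/(1 − δ₂)`, and `θ₁, θ₂ ∈ (0,1)`
determined by the odds relations `θ₁/(1 − θ₁) = f₁·θⱼ/(1 − θⱼ)` and
`θ₂/(1 − θ₂) = f₂·θⱼ/(1 − θⱼ)`, we have
`I(Xⱼ; Mᵢ) = H₂(θⱼ) − H₂(θ₁)·(θᵢ + e^{−ε}(1 − θᵢ)) − H₂(θ₂)·(1 − e^{−ε})(1 − θᵢ)`. -/
theorem osdprr_cross_mutual_information {Ω : Type*} [MeasurableSpace Ω]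
    (μ : Measure Ω) [IsProbabilityMeasure μ]
    (Xi Xj Mi : Ω → Bool)
    (hXi : Measurable Xi) (hXj : Measurable Xj) (hMi : Measurable Mi)
    (ε : ℝ) (hε : 0 < ε)
    (hpos : ∀ a b : Bool, 0 < μ {ω | Xi ω = a ∧ Xj ω = b})
    -- OSDPRR for Xᵢ: a sensitive record is never released
    (hrel0 : μ {ω | Mi ω = true ∧ Xi ω = false} = 0)
    -- OSDPRR for Xᵢ: a non-sensitive record is released with probability 1 - e^{-ε}
    (hrel1 : (μ {ω | Mi ω = true ∧ Xi ω = true}).toReal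
        = (1 - Real.exp (-ε)) * (μ {ω | Xi ω = true}).toReal)
    -- conditional independence of Mᵢ and Xⱼ given Xᵢ
    (hCI : ∀ m a b : Bool,
      μ {ω | Mi ω = m ∧ Xi ω = a ∧ Xj ω = b} * μ {ω | Xi ω = a}
        = μ {ω | Mi ω = m ∧ Xi ω = a} * μ {ω | Xi ω = a ∧ Xj ω = b})
    -- the named quantities
    (θi θj δ₁ δ₂ f₁ f₂ θ₁ θ₂ : ℝ)
    (hθi : θi = (μ {ω | Xi ω = false}).toReal)
    (hθj : θj = (μ {ω | Xj ω = false}).toReal)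
    (hδ₁ : δ₁ = condProb μ {ω | Xi ω = false} {ω | Xj ω = false})
    (hδ₂ : δ₂ = condProb μ {ω | Xi ω = false} {ω | Xj ω = true})
    (hf₁ : f₁ = (δ₁ * (Real.exp ε - 1) + 1) / (δ₂ * (Real.exp ε - 1) + 1))
    (hf₂ : f₂ = (1 - δ₁) / (1 - δ₂))
    (hθ₁mem : θ₁ ∈ Set.Ioo (0 : ℝ) 1) (hθ₂mem : θ₂ ∈ Set.Ioo (0 : ℝ) 1)
    (hθ₁odds : θ₁ / (1 - θ₁) = f₁ * (θj / (1 - θj)))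
    (hθ₂odds : θ₂ / (1 - θ₂) = f₂ * (θj / (1 - θj))) :
    (∑ x : Bool, ∑ m : Bool,
        (μ {ω | Xj ω = x ∧ Mi ω = m}).toReal *
          Real.log ((μ {ω | Xj ω = x ∧ Mi ω = m}).toReal
            / ((μ {ω | Xj ω = x}).toReal * (μ {ω | Mi ω = m}).toReal)))
      = binEnt θj
        - binEnt θ₁ * (θi + Real.exp (-ε) * (1 - θi))
        - binEnt θ₂ * ((1 - Real.exp (-ε)) * (1 - θi)) := by
  set q : ℝ := Real.exp (-ε) with hq
  have hq0 : 0 < q := Real.exp_pos _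
  have hq1 : q < 1 := by
    rw [hq, ← Real.exp_zero]
    exact Real.exp_lt_exp.mpr (by linarith)
  -- atom abbreviations
  set a := (μ {ω | Xi ω = false ∧ Xj ω = false}).toReal with hadef
  set b := (μ {ω | Xi ω = false ∧ Xj ω = true}).toReal with hbdef
  set c := (μ {ω | Xi ω = true ∧ Xj ω = false}).toReal with hcdef
  set d := (μ {ω | Xi ω = true ∧ Xj ω = true}).toReal with hddef
  have hpab : ∀ u v : Bool, 0 < (μ {ω | Xi ω = u ∧ Xj ω = v}).toReal := fun u v =>
    ENNReal.toReal_pos (hpos u v).ne' (measure_ne_top μ _)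
  have ha : 0 < a := hpab false false
  have hb : 0 < b := hpab false true
  have hc : 0 < c := hpab true false
  have hd : 0 < d := hpab true true
  -- marginals of Xi
  have hXim : ∀ u : Bool, (μ {ω | Xi ω = u}).toReal
      = (μ {ω | Xi ω = u ∧ Xj ω = false}).toReal + (μ {ω | Xi ω = u ∧ Xj ω = true}).toReal := by
    intro u
    have h := split_bool_real μ hXj {ω | Xi ω = u}
    have h0 : {ω | Xi ω = u} ∩ {ω | Xj ω = false} = {ω | Xi ω = u ∧ Xj ω = false} := by
      ext ω; simp only [Set.mem_inter_iff, Set.mem_setOf_eq]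
    have h1 : {ω | Xi ω = u} ∩ {ω | Xj ω = true} = {ω | Xi ω = u ∧ Xj ω = true} := by
      ext ω; simp only [Set.mem_inter_iff, Set.mem_setOf_eq]
    rwa [h0, h1] at h
  have hXif : (μ {ω | Xi ω = false}).toReal = a + b := hXim false
  have hXit : (μ {ω | Xi ω = true}).toReal = c + d := hXim true
  -- marginals of Xj
  have hXjm : ∀ v : Bool, (μ {ω | Xj ω = v}).toReal
      = (μ {ω | Xi ω = false ∧ Xj ω = v}).toReal + (μ {ω | Xi ω = true ∧ Xj ω = v}).toReal := by
    intro v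
    have h := split_bool_real μ hXi {ω | Xj ω = v}
    have h0 : {ω | Xj ω = v} ∩ {ω | Xi ω = false} = {ω | Xi ω = false ∧ Xj ω = v} := by
      ext ω; simp only [Set.mem_inter_iff, Set.mem_setOf_eq]; tauto
    have h1 : {ω | Xj ω = v} ∩ {ω | Xi ω = true} = {ω | Xi ω = true ∧ Xj ω = v} := by
      ext ω; simp only [Set.mem_inter_iff, Set.mem_setOf_eq]; tauto
    rwa [h0, h1] at h
  have hXjf : (μ {ω | Xj ω = false}).toReal = a + c := hXjm false
  have hXjt : (μ {ω | Xj ω = true}).toReal = b + d := hXjm true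
  -- total mass
  have hsum : a + b + c + d = 1 := by
    have h := split_bool_real μ hXi (Set.univ : Set Ω)
    rw [Set.univ_inter, Set.univ_inter] at h
    rw [measure_univ, ENNReal.toReal_one] at h
    rw [hXif, hXit] at h
    linarith
  -- released pieces
  have hM0 : ∀ v : Bool, μ {ω | Mi ω = true ∧ Xi ω = false ∧ Xj ω = v} = 0 := fun v =>
    measure_mono_null (Set.setOf_subset_setOf.mpr (fun ω h => ⟨h.1, h.2.1⟩)) hrel0
  have hXitpos : (0:ℝ) < (μ {ω | Xi ω = true}).toReal := by rw [hXit]; linarith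
  have hM1 : ∀ v : Bool, (μ {ω | Mi ω = true ∧ Xi ω = true ∧ Xj ω = v}).toReal
      = (1 - q) * (μ {ω | Xi ω = true ∧ Xj ω = v}).toReal := by
    intro v
    have h := congrArg ENNReal.toReal (hCI true true v)
    rw [ENNReal.toReal_mul, ENNReal.toReal_mul, hrel1] at h
    have h2 : ((1 - q) * (μ {ω | Xi ω = true ∧ Xj ω = v}).toReal)
        * (μ {ω | Xi ω = true}).toReal
        = (1 - q) * (μ {ω | Xi ω = true}).toReal * (μ {ω | Xi ω = true ∧ Xj ω = v}).toReal := by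
      ring
    exact mul_right_cancel₀ hXitpos.ne' (h.trans h2.symm)
  -- joint (Xj, Mi = true)
  have hJt : ∀ v : Bool, (μ {ω | Xj ω = v ∧ Mi ω = true}).toReal
      = (1 - q) * (μ {ω | Xi ω = true ∧ Xj ω = v}).toReal := by
    intro v
    have h := split_bool_real μ hXi {ω | Xj ω = v ∧ Mi ω = true}
    have h0 : {ω | Xj ω = v ∧ Mi ω = true} ∩ {ω | Xi ω = false}
        = {ω | Mi ω = true ∧ Xi ω = false ∧ Xj ω = v} := by
      ext ω; simp only [Set.mem_inter_iff, Set.mem_setOf_eq]; tauto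
    have h1 : {ω | Xj ω = v ∧ Mi ω = true} ∩ {ω | Xi ω = true}
        = {ω | Mi ω = true ∧ Xi ω = true ∧ Xj ω = v} := by
      ext ω; simp only [Set.mem_inter_iff, Set.mem_setOf_eq]; tauto
    rw [h0, h1, hM0 v, ENNReal.toReal_zero, hM1 v] at h
    linarith
  -- joint (Xj, Mi = false)
  have hJsplit : ∀ v : Bool, (μ {ω | Xj ω = v}).toReal
      = (μ {ω | Xj ω = v ∧ Mi ω = false}).toReal + (μ {ω | Xj ω = v ∧ Mi ω = true}).toReal := by
    intro v
    have h := split_bool_real μ hMi {ω | Xj ω = v}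
    have h0 : {ω | Xj ω = v} ∩ {ω | Mi ω = false} = {ω | Xj ω = v ∧ Mi ω = false} := by
      ext ω; simp only [Set.mem_inter_iff, Set.mem_setOf_eq]
    have h1 : {ω | Xj ω = v} ∩ {ω | Mi ω = true} = {ω | Xj ω = v ∧ Mi ω = true} := by
      ext ω; simp only [Set.mem_inter_iff, Set.mem_setOf_eq]
    rwa [h0, h1] at h
  have hJff : (μ {ω | Xj ω = false ∧ Mi ω = false}).toReal = a + q * c := by
    have := hJsplit false; have h2 := hJt false
    rw [hXjf] at this; rw [← hcdef] at h2; linarith [h2]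
  have hJtf : (μ {ω | Xj ω = true ∧ Mi ω = false}).toReal = b + q * d := by
    have := hJsplit true; have h2 := hJt true
    rw [hXjt] at this; rw [← hddef] at h2; linarith [h2]
  have hJft : (μ {ω | Xj ω = false ∧ Mi ω = true}).toReal = (1 - q) * c := by
    have h2 := hJt false; rw [← hcdef] at h2; exact h2
  have hJtt : (μ {ω | Xj ω = true ∧ Mi ω = true}).toReal = (1 - q) * d := by
    have h2 := hJt true; rw [← hddef] at h2; exact h2
  -- marginals of Mi
  have hQt : (μ {ω | Mi ω = true}).toReal = (1 - q) * (c + d) := by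
    have h := split_bool_real μ hXi {ω | Mi ω = true}
    have h0 : {ω | Mi ω = true} ∩ {ω | Xi ω = false} = {ω | Mi ω = true ∧ Xi ω = false} := by
      ext ω; simp only [Set.mem_inter_iff, Set.mem_setOf_eq]
    have h1 : {ω | Mi ω = true} ∩ {ω | Xi ω = true} = {ω | Mi ω = true ∧ Xi ω = true} := by
      ext ω; simp only [Set.mem_inter_iff, Set.mem_setOf_eq]
    rw [h0, h1, hrel0, ENNReal.toReal_zero, hrel1, hXit] at h
    linarith
  have hQf : (μ {ω | Mi ω = false}).toReal = a + b + q * (c + d) := by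
    have h := split_bool_real μ hMi (Set.univ : Set Ω)
    rw [Set.univ_inter, Set.univ_inter, measure_univ, ENNReal.toReal_one] at h
    rw [hQt] at h
    linear_combination (-1 : ℝ) * h - hsum
  -- basic positivity
  have hac : (0:ℝ) < a + c := by linarith
  have hbd : (0:ℝ) < b + d := by linarith
  have hcd : (0:ℝ) < c + d := by linarith
  have h1q : (0:ℝ) < 1 - q := by linarith
  have hqcd : (0:ℝ) < q * (c + d) := mul_pos hq0 hcd
  have hD : (0:ℝ) < a + b + q * (c + d) := by linarith
  have haqc : (0:ℝ) < a + q * c := by nlinarith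
  have hbqd : (0:ℝ) < b + q * d := by nlinarith
  -- conditional probabilities
  have hδ₁v : δ₁ = a / (a + c) := by
    rw [hδ₁, condProb]
    have h0 : {ω | Xi ω = false} ∩ {ω | Xj ω = false} = {ω | Xi ω = false ∧ Xj ω = false} := by
      ext ω; simp only [Set.mem_inter_iff, Set.mem_setOf_eq]
    rw [h0, hXjf, ← hadef]
  have hδ₂v : δ₂ = b / (b + d) := by
    rw [hδ₂, condProb]
    have h0 : {ω | Xi ω = false} ∩ {ω | Xj ω = true} = {ω | Xi ω = false ∧ Xj ω = true} := by
      ext ω; simp only [Set.mem_inter_iff, Set.mem_setOf_eq]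
    rw [h0, hXjt, ← hbdef]
  -- θ values
  have hθjv : θj = a + c := by rw [hθj, hXjf]
  have h1mθj : 1 - θj = b + d := by rw [hθjv]; linarith
  have hθiv : θi = a + b := by rw [hθi, hXif]
  have h1mθi : 1 - θi = c + d := by rw [hθiv]; linarith
  have hE : Real.exp ε = 1 / q := by
    rw [eq_div_iff hq0.ne', hq, ← Real.exp_add]; simp
  obtain ⟨hθ₂0, hθ₂1⟩ := hθ₂mem
  have h1θ₂ : (0:ℝ) < 1 - θ₂ := by linarith
  have key2 : θ₂ / (1 - θ₂) = c / d := by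
    rw [hθ₂odds, hf₂, hδ₁v, hδ₂v, h1mθj, hθjv]
    have e1 : 1 - a / (a + c) = c / (a + c) := by field_simp; ring
    have e2 : 1 - b / (b + d) = d / (b + d) := by field_simp; ring
    rw [e1, e2]
    field_simp
  have hθ₂v : θ₂ = c / (c + d) := by
    have h := (div_eq_div_iff h1θ₂.ne' hd.ne').mp key2
    rw [eq_div_iff hcd.ne']
    linear_combination h
  have h1mθ₂ : 1 - θ₂ = d / (c + d) := by
    rw [hθ₂v, eq_div_iff hcd.ne']
    field_simp
    ring
  obtain ⟨hθ₁0, hθ₁1⟩ := hθ₁mem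
  have h1θ₁ : (0:ℝ) < 1 - θ₁ := by linarith
  have key1 : θ₁ / (1 - θ₁) = (a + q * c) / (b + q * d) := by
    rw [hθ₁odds, hf₁, hδ₁v, hδ₂v, h1mθj, hθjv, hE]
    have eN : a / (a + c) * (1 / q - 1) + 1 = (a + q * c) / (q * (a + c)) := by
      field_simp; ring
    have eD : b / (b + d) * (1 / q - 1) + 1 = (b + q * d) / (q * (b + d)) := by
      field_simp; ring
    rw [eN, eD]
    rw [div_div_div_eq]
    field_simp
  have hθ₁v : θ₁ = (a + q * c) / (a + b + q * (c + d)) := by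
    have h := (div_eq_div_iff h1θ₁.ne' hbqd.ne').mp key1
    rw [eq_div_iff hD.ne']
    linear_combination h
  have h1mθ₁ : 1 - θ₁ = (b + q * d) / (a + b + q * (c + d)) := by
    rw [hθ₁v, eq_div_iff hD.ne']
    field_simp
    ring
  -- expand the sum and substitute
  simp only [Fintype.sum_bool]
  rw [hJff, hJtf, hJft, hJtt, hXjf, hXjt, hQf, hQt]
  simp only [binEnt]
  rw [h1mθ₁, hθ₁v, h1mθ₂, hθ₂v, h1mθj, hθjv, h1mθi, hθiv]
  -- log rewrites
  have l1 : Real.log ((a + q * c) / ((a + c) * (a + b + q * (c + d))))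
      = Real.log (a + q * c) - (Real.log (a + c) + Real.log (a + b + q * (c + d))) := by
    rw [Real.log_div haqc.ne' (mul_ne_zero hac.ne' hD.ne'), Real.log_mul hac.ne' hD.ne']
  have l2 : Real.log ((1 - q) * c / ((a + c) * ((1 - q) * (c + d))))
      = Real.log (1 - q) + Real.log c
        - (Real.log (a + c) + (Real.log (1 - q) + Real.log (c + d))) := by
    rw [Real.log_div (by positivity) (by positivity), Real.log_mul h1q.ne' hc.ne',
      Real.log_mul hac.ne' (by positivity), Real.log_mul h1q.ne' hcd.ne']
  have l3 : Real.log ((b + q * d) / ((b + d) * (a + b + q * (c + d))))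
      = Real.log (b + q * d) - (Real.log (b + d) + Real.log (a + b + q * (c + d))) := by
    rw [Real.log_div hbqd.ne' (mul_ne_zero hbd.ne' hD.ne'), Real.log_mul hbd.ne' hD.ne']
  have l4 : Real.log ((1 - q) * d / ((b + d) * ((1 - q) * (c + d))))
      = Real.log (1 - q) + Real.log d
        - (Real.log (b + d) + (Real.log (1 - q) + Real.log (c + d))) := by
    rw [Real.log_div (by positivity) (by positivity), Real.log_mul h1q.ne' hd.ne',
      Real.log_mul hbd.ne' (by positivity), Real.log_mul h1q.ne' hcd.ne']
  have l5 : Real.log ((a + q * c) / (a + b + q * (c + d)))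
      = Real.log (a + q * c) - Real.log (a + b + q * (c + d)) :=
    Real.log_div haqc.ne' hD.ne'
  have l6 : Real.log ((b + q * d) / (a + b + q * (c + d)))
      = Real.log (b + q * d) - Real.log (a + b + q * (c + d)) :=
    Real.log_div hbqd.ne' hD.ne'
  have l7 : Real.log (c / (c + d)) = Real.log c - Real.log (c + d) :=
    Real.log_div hc.ne' hcd.ne'
  have l8 : Real.log (d / (c + d)) = Real.log d - Real.log (c + d) :=
    Real.log_div hd.ne' hcd.ne'
  rw [l1, l2, l3, l4, l5, l6, l7, l8]
  field_simp
  ring
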